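/- For every n ≥ 1 and every k ≥ 2, f(n) ≤ f(n,k) ≤ 2^{⌈n/k⌉}·f(n); consequently |log₂ f(n,k)/n − log₂ f(n)/n| ≤ 1/k + 1/n for all n. -/

import Mathlib

open Finset Filter
open scoped Classical

/-- A finite set of naturals is primitive: no element divides another distinct element. -/
def Primitive (S : Finset ℕ) : Prop := ∀ a ∈ S, ∀ b ∈ S, a ≠ b → ¬ a ∣ b

/-- `f n` is the number of primitive subsets of `{1,...,n}`. -/
noncomputable def f (n : ℕ) : ℕ :=
  ((Finset.Icc 1 n).powerset.filter Primitive).card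

/-- A natural is `k`-smooth: all its prime factors are at most the `k`-th prime. -/
def SmoothNat (k m : ℕ) : Prop := ∀ p, p.Prime → p ∣ m → p ≤ Nat.nth Nat.Prime (k - 1)

/-- A set is `k`-core: no two distinct elements `a ∣ b` with `b/a` having all
prime factors at most the `k`-th prime. -/
def KCore (k : ℕ) (S : Finset ℕ) : Prop :=
  ∀ a ∈ S, ∀ b ∈ S, a ≠ b → ¬ (a ∣ b ∧ SmoothNat k (b / a))

/-- `fk n k` is the number of `k`-core subsets of `{1,...,n}`. -/
noncomputable def fk (n k : ℕ) : ℕ :=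
  ((Finset.Icc 1 n).powerset.filter (KCore k)).card

/-- `Dk k` is the product of the first `k` primes. -/
noncomputable def Dk (k : ℕ) : ℕ := ∏ i ∈ Finset.range k, Nat.nth Nat.Prime i

/-- `Pk k x` is the number of primitive subsets of the set of `k`-smooth integers in `{1,...,x}`. -/
noncomputable def Pk (k x : ℕ) : ℕ :=
  (((Finset.Icc 1 x).filter (SmoothNat k)).powerset.filter Primitive).card

lemma nth_prime_ge (m : ℕ) : m + 2 ≤ Nat.nth Nat.Prime m := by
  induction m with
  | zero => exact (Nat.prime_nth_prime 0).two_le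
  | succ m ih =>
      have h : Nat.nth Nat.Prime m < Nat.nth Nat.Prime (m + 1) :=
        (Nat.nth_lt_nth (p := Nat.Prime) Nat.infinite_setOf_prime).mpr (Nat.lt_succ_self m)
      omega

lemma f_pos (n : ℕ) : 0 < f n := by
  apply Finset.card_pos.mpr
  refine ⟨∅, ?_⟩
  simp [Primitive]

lemma f_le_fk (n k : ℕ) : f n ≤ fk n k := by
  apply Finset.card_le_card
  apply Finset.monotone_filter_right
  intro S _ hS a ha b hb hab hc
  exact hS a ha b hb hab hc.1

lemma trunc_primitive (n k : ℕ) (hk : 2 ≤ k) (S : Finset ℕ) (hS : S ⊆ Finset.Icc 1 n)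
    (h : KCore k S) : Primitive (S.filter (fun a => n / k < a)) := by
  intro a ha b hb hab hdvd
  simp only [Finset.mem_filter] at ha hb
  obtain ⟨haS, han⟩ := ha
  obtain ⟨hbS, hbn⟩ := hb
  refine h a haS b hbS hab ⟨hdvd, ?_⟩
  intro p hp hpd
  have hb_le : b ≤ n := (Finset.mem_Icc.mp (hS hbS)).2
  have ha_pos : 1 ≤ a := (Finset.mem_Icc.mp (hS haS)).1
  have hb_pos : 1 ≤ b := (Finset.mem_Icc.mp (hS hbS)).1
  obtain ⟨r, hr⟩ := hdvd
  have hrr : b / a = r := by rw [hr]; exact Nat.mul_div_cancel_left r (by omega)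
  have hr_pos : 1 ≤ r := by
    rcases Nat.eq_zero_or_pos r with h0 | h0
    · subst h0; simp at hr; omega
    · exact h0
  have hrk : r ≤ k := by
    by_contra hc
    push_neg at hc
    have h1 : (k + 1) * (n / k + 1) ≤ r * a := Nat.mul_le_mul hc (by omega)
    have h2 := Nat.div_add_mod n k
    have h3 : n % k < k := Nat.mod_lt n (by omega)
    nlinarith [hr]
  rw [hrr] at hpd
  have hp_le : p ≤ r := Nat.le_of_dvd (by omega) hpd
  have := nth_prime_ge (k - 1)
  omega

lemma fk_le (n k : ℕ) (hk : 2 ≤ k) : fk n k ≤ 2 ^ (n / k) * f n := by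
  set m := n / k with hm
  have key : fk n k ≤ ((Finset.Icc 1 m).powerset ×ˢ
      ((Finset.Icc 1 n).powerset.filter Primitive)).card := by
    apply Finset.card_le_card_of_injOn
      (fun S => (S.filter (fun a => a ≤ m), S.filter (fun a => m < a)))
    · intro S hS
      simp only [Finset.mem_coe, Finset.mem_filter, Finset.mem_powerset] at hS
      obtain ⟨hsub, hcore⟩ := hS
      rw [Finset.mem_coe, Finset.mem_product]
      constructor
      · rw [Finset.mem_powerset]
        intro x hx
        simp only [Finset.mem_filter] at hx
        exact Finset.mem_Icc.mpr ⟨(Finset.mem_Icc.mp (hsub hx.1)).1, hx.2⟩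
      · rw [Finset.mem_filter, Finset.mem_powerset]
        exact ⟨(Finset.filter_subset _ _).trans hsub, trunc_primitive n k hk S hsub hcore⟩
    · intro S hS T hT h
      have h1 : S.filter (fun a => a ≤ m) = T.filter (fun a => a ≤ m) :=
        congrArg Prod.fst h
      have h2 : S.filter (fun a => m < a) = T.filter (fun a => m < a) :=
        congrArg Prod.snd h
      have e : ∀ U : Finset ℕ, U.filter (fun a => ¬ a ≤ m) = U.filter (fun a => m < a) :=
        fun U => Finset.filter_congr (fun x _ => by simp [not_le])
      calc S = S.filter (fun a => a ≤ m) ∪ S.filter (fun a => ¬ a ≤ m) :=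
            (Finset.filter_union_filter_not_eq _ S).symm
        _ = T.filter (fun a => a ≤ m) ∪ T.filter (fun a => ¬ a ≤ m) := by
            rw [h1, e S, e T, h2]
        _ = T := Finset.filter_union_filter_not_eq _ T
  calc fk n k ≤ _ := key
    _ = 2 ^ m * f n := by
        rw [Finset.card_product, Finset.card_powerset, Nat.card_Icc]
        simp [f]
    _ = 2 ^ (n / k) * f n := by rw [hm]

/-- `f(n) ≤ f(n,k) ≤ 2^{⌈n/k⌉} f(n)`, hence
`|log₂ f(n,k)/n − log₂ f(n)/n| ≤ 1/k + 1/n`. -/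
theorem stmt_18 (n k : ℕ) (hn : 1 ≤ n) (hk : 2 ≤ k) :
    f n ≤ fk n k ∧ fk n k ≤ 2 ^ ((n + k - 1) / k) * f n ∧
    |Real.logb 2 (fk n k) / n - Real.logb 2 (f n) / n| ≤ 1 / k + 1 / n := by
  have h1 := f_le_fk n k
  have h2' := fk_le n k hk
  have hdiv : n / k ≤ (n + k - 1) / k := Nat.div_le_div_right (by omega)
  have h2 : fk n k ≤ 2 ^ ((n + k - 1) / k) * f n :=
    h2'.trans (Nat.mul_le_mul_right _ (Nat.pow_le_pow_right (by omega) hdiv))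
  refine ⟨h1, h2, ?_⟩
  set c : ℕ := (n + k - 1) / k with hc
  have hf1 : (1 : ℝ) ≤ (f n : ℝ) := by exact_mod_cast f_pos n
  have hfk1 : (f n : ℝ) ≤ (fk n k : ℝ) := by exact_mod_cast h1
  have hfkpos : (0 : ℝ) < fk n k := lt_of_lt_of_le (by linarith) hfk1
  have hnpos : (0 : ℝ) < n := by exact_mod_cast hn
  have hkpos : (0 : ℝ) < k := by positivity
  -- logb monotone
  have hlow : Real.logb 2 (f n) ≤ Real.logb 2 (fk n k) :=
    Real.logb_le_logb_of_le (by norm_num) (by linarith) hfk1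
  have hfk_le : (fk n k : ℝ) ≤ 2 ^ c * (f n : ℝ) := by exact_mod_cast h2
  have hup : Real.logb 2 (fk n k) ≤ c + Real.logb 2 (f n) := by
    have := Real.logb_le_logb_of_le (b := 2) (by norm_num) (by linarith) hfk_le
    rwa [Real.logb_mul (by positivity) (by linarith), Real.logb_pow,
      Real.logb_self_eq_one (by norm_num), mul_one] at this
  rw [abs_of_nonneg (by
    rw [div_sub_div_same]
    exact div_nonneg (by linarith) hnpos.le)]
  rw [div_sub_div_same]
  rw [div_le_iff₀ hnpos]
  have hcle : (c : ℝ) ≤ n / k + 1 := by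
    have h3 : (c : ℝ) ≤ ((n + k - 1 : ℕ) : ℝ) / (k : ℝ) := Nat.cast_div_le
    have h4 : ((n + k - 1 : ℕ) : ℝ) = (n : ℝ) + (k : ℝ) - 1 := by
      push_cast [Nat.cast_sub (by omega : 1 ≤ n + k)]; ring
    rw [h4] at h3
    have e1 : ((n : ℝ) + k - 1) / k = n / k + (k - 1) / k := by ring
    have e2 : ((k : ℝ) - 1) / k ≤ 1 := by
      rw [div_le_one hkpos]; linarith
    linarith
  have : (1 / (k : ℝ) + 1 / n) * n = n / k + 1 := by field_simp
  rw [this]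
  linarith
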